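/- The integral of the function p ↦ (1 − exp(−p))·(1 − exp(p − 2))·(1 − exp(−(1 − p)))·(1 − exp(−p − 1)) over the interval [0,1] equals 2·exp(−1) + 2·exp(−2) + 3·exp(−4) − 1. -/
import Mathlib

open Real

noncomputable def FF (p : ℝ) : ℝ :=
  (1 + exp (-1) + 2 * exp (-1) ^ 2 + exp (-1) ^ 3 + exp (-1) ^ 4) * p
    + (1 + exp (-1) + exp (-1) ^ 2 + exp (-1) ^ 3) * exp (-p)
    - (exp (-1) + exp (-1) ^ 2 + exp (-1) ^ 3 + exp (-1) ^ 4) * exp p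
    + (1 / 2) * exp (-1) ^ 3 * exp p ^ 2
    - (1 / 2) * exp (-1) * exp (-p) ^ 2

lemma FF_deriv (p : ℝ) :
    HasDerivAt FF
      ((1 - exp (-p)) * (1 - exp (p - 2)) * (1 - exp (-(1 - p))) * (1 - exp (-p - 1))) p := by
  have hneg : HasDerivAt (fun x : ℝ => exp (-x)) (exp (-p) * (-1)) p :=
    (hasDerivAt_neg p).exp
  have hexp : HasDerivAt (fun x : ℝ => exp x) (exp p) p := Real.hasDerivAt_exp p
  have h : HasDerivAt FF
      ((1 + exp (-1) + 2 * exp (-1) ^ 2 + exp (-1) ^ 3 + exp (-1) ^ 4) * 1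
        + (1 + exp (-1) + exp (-1) ^ 2 + exp (-1) ^ 3) * (exp (-p) * (-1))
        - (exp (-1) + exp (-1) ^ 2 + exp (-1) ^ 3 + exp (-1) ^ 4) * exp p
        + (1 / 2) * exp (-1) ^ 3 * (2 * exp p ^ 1 * exp p)
        - (1 / 2) * exp (-1) * (2 * exp (-p) ^ 1 * (exp (-p) * (-1)))) p := by
    exact ((((hasDerivAt_id p).const_mul _).add (hneg.const_mul _)).sub
      (hexp.const_mul _)).add ((hexp.pow 2).const_mul _) |>.sub
      ((hneg.pow 2).const_mul _)
  convert h using 1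
  have e1 : exp (p - 2) = exp p * exp (-1) ^ 2 := by
    rw [show p - 2 = p + -1 + -1 by ring, exp_add, exp_add]; ring
  have e2 : exp (-(1 - p)) = exp p * exp (-1) := by
    rw [show -(1 - p) = p + -1 by ring, exp_add]
  have e3 : exp (-p - 1) = exp (-p) * exp (-1) := by
    rw [show -p - 1 = -p + -1 by ring, exp_add]
  have e4 : exp (-p) * exp p = 1 := by rw [← exp_add]; simp
  rw [e1, e2, e3]
  linear_combination (exp (-1) + 2 * exp (-1) ^ 2 + exp (-1) ^ 3 + exp (-1) ^ 4
    - exp (-p) * exp (-1) ^ 2 - exp (-p) * exp (-1) ^ 3 - exp p * exp (-1) ^ 3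
    - exp p * exp (-1) ^ 4 + exp (-p) * exp p * exp (-1) ^ 4) * e4

/-- `∫_0^1 (1 − e^{−p})(1 − e^{p−2})(1 − e^{−(1−p)})(1 − e^{−p−1}) dp
      = 2e^{−1} + 2e^{−2} + 3e^{−4} − 1`. -/
theorem stmt_13 :
    ∫ p in (0 : ℝ)..1,
        (1 - Real.exp (-p)) * (1 - Real.exp (p - 2)) *
          (1 - Real.exp (-(1 - p))) * (1 - Real.exp (-p - 1))
      = 2 * Real.exp (-1) + 2 * Real.exp (-2) + 3 * Real.exp (-4) - 1 := by
  have hcont : Continuous fun p : ℝ =>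
      (1 - exp (-p)) * (1 - exp (p - 2)) * (1 - exp (-(1 - p))) * (1 - exp (-p - 1)) := by
    fun_prop
  rw [intervalIntegral.integral_eq_sub_of_hasDerivAt (fun p _ => FF_deriv p)
    (hcont.intervalIntegrable 0 1)]
  simp only [FF]
  have e2 : exp (-2 : ℝ) = exp (-1) ^ 2 := by
    rw [show (-2 : ℝ) = -1 + -1 by ring, exp_add]; ring
  have e4 : exp (-4 : ℝ) = exp (-1) ^ 4 := by
    rw [show (-4 : ℝ) = -1 + -1 + -1 + -1 by ring, exp_add, exp_add, exp_add]; ring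
  have h1 : exp (1 : ℝ) * exp (-1) = 1 := by rw [← exp_add]; simp
  rw [e2, e4, exp_zero, show (-0 : ℝ) = 0 by ring, exp_zero]
  linear_combination (-1 - (1/2) * exp (-1) - exp (-1) ^ 2 - exp (-1) ^ 3
    + (1/2) * exp (1:ℝ) * exp (-1) ^ 2) * h1
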